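/- For the last-touch attribution rule, the impression adjacency relation with post-attribution contribution bound enforcement with bound r maps any two adjacent datasets (differing by a single impression) to attributed datasets at ℓ1-distance at most 2r. -/

import Mathlib

/-! Framework for differentially private ad conversion measurement
(Delaney et al., "Differentially Private Ad Conversion Measurement"). -/

structure Impression where
  time : ℕ
  user : ℕ
  pub : ℕ
  adv : ℕ
  id : ℕ
deriving DecidableEq

structure Conversion where
  time : ℕ
  user : ℕ
  adv : ℕ
  id : ℕ
deriving DecidableEq

structure Dataset where
  imps : List Impression
  convs : List Conversion

/-- An attribution rule maps a time-ordered list of impressions and a conversion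
to a list of credits (one per impression). -/
abbrev AttrRule := List Impression → Conversion → List ℝ

/-- A valid attribution rule outputs one nonnegative weight per impression, summing to 1. -/
def ValidRule (a : AttrRule) : Prop :=
  ∀ is c, is ≠ [] →
    (a is c).length = is.length ∧ (a is c).sum = 1 ∧ ∀ w ∈ a is c, (0 : ℝ) ≤ w

/-- Impressions eligible for attribution of conversion `c`: those occurring earlier
with the same user and advertiser. -/
def eligible (D : Dataset) (c : Conversion) : List Impression :=
  D.imps.filter fun i => decide (i.time < c.time ∧ i.user = c.user ∧ i.adv = c.adv)

/-- ℓ₁ distance between attributed datasets. -/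
noncomputable def l1dist (w w' : (Impression × Conversion) →₀ ℝ) : ℝ :=
  (w - w').sum fun _ v => |v|

/-- Impressions and conversions are listed in time order. -/
def SortedDS (D : Dataset) : Prop :=
  D.imps.Pairwise (fun i j => i.time ≤ j.time) ∧
  D.convs.Pairwise (fun c c' => c.time ≤ c'.time)

/-- Inner loop of post-attribution contribution-bound enforcement: each weighted
(impression, conversion) pair is kept only if the remaining bound of its scope covers
the weight, in which case the weight is deducted. -/
noncomputable def applyPairs {σ : Type} [DecidableEq σ] (s : Impression → σ) (c : Conversion) :
    List (Impression × ℝ) → (σ → ℝ) × ((Impression × Conversion) →₀ ℝ) →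
      (σ → ℝ) × ((Impression × Conversion) →₀ ℝ)
  | [], st => st
  | (i, w) :: rest, st =>
      if w ≤ st.1 (s i) then
        applyPairs s c rest
          (Function.update st.1 (s i) (st.1 (s i) - w), st.2 + Finsupp.single (i, c) w)
      else
        applyPairs s c rest st

/-- Attribution with post-attribution contribution bound enforcement (Algorithm 1),
with contribution bounding scope map `s` and contribution bound `r`. -/
noncomputable def postAttr {σ : Type} [DecidableEq σ] (a : AttrRule) (s : Impression → σ)
    (r : ℝ) (D : Dataset) : (Impression × Conversion) →₀ ℝ :=
  (D.convs.foldl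
    (fun st c => applyPairs s c ((eligible D c).zip (a (eligible D c) c)) st)
    ((fun _ => r : σ → ℝ), (0 : (Impression × Conversion) →₀ ℝ))).2

/-- Attribution with pre-attribution contribution bound enforcement (Algorithm 2):
for each conversion, every scope with an eligible impression pays one unit of its bound
if available, otherwise its impressions are excluded from attribution. -/
noncomputable def preAttr {σ : Type} [DecidableEq σ] (a : AttrRule) (s : Impression → σ)
    (r : ℝ) (D : Dataset) : (Impression × Conversion) →₀ ℝ :=
  (D.convs.foldl
    (fun (st : (σ → ℝ) × ((Impression × Conversion) →₀ ℝ)) c =>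
      let el := eligible D c
      let surv := el.filter fun i => decide ((1 : ℝ) ≤ st.1 (s i))
      let scopes := (el.map s).dedup
      ((fun x => if x ∈ scopes ∧ (1 : ℝ) ≤ st.1 x then st.1 x - 1 else st.1 x : σ → ℝ),
        st.2 + ((surv.zip (a surv c)).map fun p => Finsupp.single (p.1, c) p.2).sum))
    ((fun _ => r : σ → ℝ), (0 : (Impression × Conversion) →₀ ℝ))).2

/-- Attribution without any contribution bound enforcement. -/
noncomputable def attrNoCap (a : AttrRule) (D : Dataset) :
    (Impression × Conversion) →₀ ℝ :=
  (D.convs.map fun c =>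
    (((eligible D c).zip (a (eligible D c) c)).map fun p => Finsupp.single (p.1, c) p.2).sum).sum

/-- Adjacency: `D'` results from `D` by adding a single impression (in time order). -/
def AddOneImpression (D D' : Dataset) : Prop :=
  ∃ (i0 : Impression) (l₁ l₂ : List Impression),
    D.imps = l₁ ++ l₂ ∧ D'.imps = l₁ ++ i0 :: l₂ ∧ D.convs = D'.convs

/-- Adjacency: `D` results from `D'` by removing all impressions whose scope (under `si`)
is `v` and all conversions whose scope (under `sc`) is `v`. -/
def RemovesScope {σ : Type} [DecidableEq σ] (si : Impression → σ)
    (sc : Conversion → Option σ) (v : σ) (D D' : Dataset) : Prop :=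
  D.imps = D'.imps.filter (fun i => decide (si i ≠ v)) ∧
  D.convs = D'.convs.filter (fun c => decide (sc c ≠ some v))

/-- First-touch attribution. -/
noncomputable def FTA : AttrRule := fun is _ =>
  match is with
  | [] => []
  | _ :: t => 1 :: t.map fun _ => 0

/-- Last-touch attribution. -/
noncomputable def LTA : AttrRule := fun is _ =>
  match is with
  | [] => []
  | _ :: _ => List.replicate (is.length - 1) 0 ++ [1]

/-- Uniform multi-touch attribution. -/
noncomputable def UNI : AttrRule := fun is _ => is.map fun _ => ((is.length : ℝ))⁻¹

/-- U-shaped attribution. -/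
noncomputable def USH : AttrRule := fun is _ =>
  match is with
  | [] => []
  | [_] => [1]
  | [_, _] => [0.5, 0.5]
  | _ :: _ :: _ :: _ =>
      (0.4 : ℝ) :: (List.replicate (is.length - 2) ((0.2 : ℝ) / ((is.length : ℝ) - 2)) ++ [0.4])

/-- Exponential time decay attribution with half-life `th`. -/
noncomputable def EXPR (th : ℝ) : AttrRule := fun is c =>
  let wt : Impression → ℝ := fun i => (2 : ℝ) ^ (-(((c.time : ℝ) - (i.time : ℝ)) / th))
  is.map fun i => wt i / (is.map wt).sum

namespace ThmA5

abbrev St := (Impression → ℝ) × ((Impression × Conversion) →₀ ℝ)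

noncomputable def lsum (u : (Impression × Conversion) →₀ ℝ) : ℝ := u.sum fun _ v => |v|

lemma lsum_eq_sum (u : (Impression × Conversion) →₀ ℝ) (s : Finset (Impression × Conversion))
    (h : u.support ⊆ s) : lsum u = ∑ x ∈ s, |u x| :=
  Finsupp.sum_of_support_subset u h _ (by simp)

lemma lsum_zero : lsum (0 : (Impression × Conversion) →₀ ℝ) = 0 := by
  simp [lsum]

lemma lsum_add_le (u v : (Impression × Conversion) →₀ ℝ) :
    lsum (u + v) ≤ lsum u + lsum v := by
  rw [lsum_eq_sum (u + v) (u.support ∪ v.support) Finsupp.support_add,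
      lsum_eq_sum u (u.support ∪ v.support) Finset.subset_union_left,
      lsum_eq_sum v (u.support ∪ v.support) Finset.subset_union_right,
      ← Finset.sum_add_distrib]
  exact Finset.sum_le_sum fun x _ => by simp [abs_add_le]

lemma lsum_single_le (x : Impression × Conversion) (a : ℝ) :
    lsum (Finsupp.single x a) ≤ |a| := by
  classical
  rw [lsum_eq_sum _ {x} Finsupp.support_single_subset]
  simp

lemma lsum_neg (u : (Impression × Conversion) →₀ ℝ) : lsum (-u) = lsum u := by
  rw [lsum_eq_sum (-u) u.support (by simp), lsum_eq_sum u u.support subset_rfl]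
  simp

lemma lsum_single1 (z : Impression × Conversion) : lsum (Finsupp.single z (1:ℝ)) ≤ 1 := by
  simpa using lsum_single_le z 1

lemma lsum_sub_le (u u' X Y : (Impression × Conversion) →₀ ℝ) :
    lsum ((u + X) - (u' + Y)) ≤ lsum (u - u') + (lsum X + lsum Y) := by
  have h : (u + X) - (u' + Y) = (u - u') + (X + -Y) := by abel
  rw [h]
  calc lsum ((u - u') + (X + -Y)) ≤ lsum (u - u') + lsum (X + -Y) := lsum_add_le _ _
    _ ≤ lsum (u - u') + (lsum X + lsum (-Y)) := by linarith [lsum_add_le X (-Y)]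
    _ = lsum (u - u') + (lsum X + lsum Y) := by rw [lsum_neg]

lemma lsum_sub_left_le (u u' X : (Impression × Conversion) →₀ ℝ) :
    lsum ((u + X) - u') ≤ lsum (u - u') + lsum X := by
  have h : (u + X) - u' = (u - u') + X := by abel
  rw [h]; exact lsum_add_le _ _

lemma lsum_sub_right_le (u u' Y : (Impression × Conversion) →₀ ℝ) :
    lsum (u - (u' + Y)) ≤ lsum (u - u') + lsum Y := by
  have h : u - (u' + Y) = (u - u') + (-Y) := by abel
  rw [h]
  calc lsum ((u - u') + (-Y)) ≤ lsum (u - u') + lsum (-Y) := lsum_add_le _ _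
    _ = lsum (u - u') + lsum Y := by rw [lsum_neg]

/-- Simplified per-conversion step for LTA with identity scope. -/
noncomputable def step (t? : Option Impression) (c : Conversion) (st : St) : St :=
  match t? with
  | none => st
  | some t =>
      if 1 ≤ st.1 t then
        (Function.update st.1 t (st.1 t - 1), st.2 + Finsupp.single (t, c) 1)
      else st

@[simp] lemma step_none (c : Conversion) (st : St) : step none c st = st := rfl

lemma step_some (t : Impression) (c : Conversion) (st : St) :
    step (some t) c st =
      if 1 ≤ st.1 t then
        (Function.update st.1 t (st.1 t - 1), st.2 + Finsupp.single (t, c) 1)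
      else st := rfl

lemma step_nonneg (t? : Option Impression) (c : Conversion) (st : St)
    (h : ∀ x, 0 ≤ st.1 x) : ∀ x, 0 ≤ (step t? c st).1 x := by
  cases t? with
  | none => simpa using h
  | some t =>
      rw [step_some]
      split
      · intro x
        rcases eq_or_ne x t with rfl | hx
        · simp only [Function.update_self]; linarith [‹(1:ℝ) ≤ st.1 x›]
        · simpa [Function.update_of_ne hx] using h x
      · exact h

lemma step_le (r : ℝ) (t? : Option Impression) (c : Conversion) (st : St)
    (h : ∀ x, st.1 x ≤ r) : ∀ x, (step t? c st).1 x ≤ r := by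
  cases t? with
  | none => simpa using h
  | some t =>
      rw [step_some]
      split
      · intro x
        rcases eq_or_ne x t with rfl | hx
        · simp only [Function.update_self]; linarith [h x]
        · simpa [Function.update_of_ne hx] using h x
      · exact h

lemma applyPairs_eq_step (c : Conversion) :
    ∀ (L : List Impression) (st : St), (∀ x, 0 ≤ st.1 x) →
      applyPairs (fun i => i) c (L.zip (LTA L c)) st = step L.getLast? c st := by
  intro L
  induction L with
  | nil => intro st _; simp [LTA, applyPairs]
  | cons x xs ih =>
      intro st h
      cases xs with
      | nil =>
          show applyPairs (fun i => i) c ([x].zip (List.replicate 0 0 ++ [1])) st = _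
          simp only [List.replicate, List.nil_append, List.zip_cons_cons, List.zip_nil_left]
          rw [applyPairs, applyPairs]
          rfl
      | cons y t =>
          have hlta : LTA (x :: y :: t) c = (0:ℝ) :: LTA (y :: t) c := by
            show List.replicate ((x :: y :: t).length - 1) (0:ℝ) ++ [1]
              = (0:ℝ) :: (List.replicate ((y :: t).length - 1) (0:ℝ) ++ [1])
            simp [List.replicate]
          rw [hlta, List.zip_cons_cons, applyPairs]
          have h0 : (0:ℝ) ≤ st.1 x := h x
          rw [if_pos h0]
          have : (Function.update st.1 x (st.1 x - 0), st.2 + Finsupp.single (x, c) 0) = st := by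
            simp
          rw [this, List.getLast?_cons_cons]
          exact ih st h

lemma fold_reduce (el : Conversion → List Impression) :
    ∀ (C : List Conversion) (st : St), (∀ x, 0 ≤ st.1 x) →
      C.foldl (fun st c => applyPairs (fun i => i) c ((el c).zip (LTA (el c) c)) st) st
        = C.foldl (fun st c => step (el c).getLast? c st) st := by
  intro C
  induction C with
  | nil => intro st _; rfl
  | cons c C ih =>
      intro st h
      simp only [List.foldl_cons]
      rw [applyPairs_eq_step c _ st h]
      exact ih _ (step_nonneg _ _ _ h)

/-! ### Eligibility and target analysis -/

def pb (c : Conversion) : Impression → Bool :=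
  fun i => decide (i.time < c.time ∧ i.user = c.user ∧ i.adv = c.adv)

def Pl (i0 : Impression) (l₁ : List Impression) : List Impression :=
  l₁.filter fun i => decide (i.user = i0.user ∧ i.adv = i0.adv)

variable {i0 : Impression} {l₁ l₂ : List Impression}

lemma l1_le (hS : (l₁ ++ i0 :: l₂).Pairwise (fun i j => i.time ≤ j.time)) :
    ∀ i ∈ l₁, i.time ≤ i0.time := fun i hi =>
  (List.pairwise_append.1 hS).2.2 i hi i0 (List.mem_cons_self)

lemma sameTgt (c : Conversion) (h : ¬ (pb c i0 = true ∧ l₂.filter (pb c) = [])) :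
    ((l₁ ++ i0 :: l₂).filter (pb c)).getLast? = ((l₁ ++ l₂).filter (pb c)).getLast? := by
  rw [List.filter_append, List.filter_append, List.filter_cons]
  by_cases hp : pb c i0 = true
  · have hne : l₂.filter (pb c) ≠ [] := fun hh => h ⟨hp, hh⟩
    rw [if_pos hp, List.getLast?_append, List.getLast?_append]
    obtain ⟨y, t, hyt⟩ := List.exists_cons_of_ne_nil hne
    rw [hyt, List.getLast?_cons_cons]
  · rw [if_neg hp]

lemma i0Tgt (hS : (l₁ ++ i0 :: l₂).Pairwise (fun i j => i.time ≤ j.time)) (c : Conversion)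
    (hi : pb c i0 = true ∧ l₂.filter (pb c) = []) :
    ((l₁ ++ i0 :: l₂).filter (pb c)).getLast? = some i0 ∧
      (l₁ ++ l₂).filter (pb c) = Pl i0 l₁ := by
  have hp := of_decide_eq_true hi.1
  constructor
  · rw [List.filter_append, List.filter_cons, if_pos hi.1, hi.2]
    exact List.getLast?_concat
  · rw [List.filter_append, hi.2, List.append_nil, Pl]
    apply List.filter_congr
    intro i hmem
    have htime : i.time ≤ i0.time := l1_le hS i hmem
    show decide _ = decide _
    rw [decide_eq_decide]
    constructor
    · rintro ⟨_, hu, ha⟩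
      exact ⟨by rw [hu, ← hp.2.1], by rw [ha, ← hp.2.2]⟩
    · rintro ⟨hu, ha⟩
      exact ⟨lt_of_le_of_lt htime hp.1, by rw [hu, hp.2.1], by rw [ha, hp.2.2]⟩

lemma keyA (hS : (l₁ ++ i0 :: l₂).Pairwise (fun i j => i.time ≤ j.time))
    (c0 c : Conversion)
    (h0 : pb c0 i0 = true ∧ l₂.filter (pb c0) = [])
    (hc : ¬ (pb c i0 = true ∧ l₂.filter (pb c) = []))
    (ht : c0.time ≤ c.time)
    (t : Impression) (h : ((l₁ ++ l₂).filter (pb c)).getLast? = some t) :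
    t ≠ i0 ∧ (Pl i0 l₁).getLast? ≠ some t := by
  have hp0 := of_decide_eq_true h0.1
  have htmem : t ∈ (l₁ ++ l₂).filter (pb c) := List.mem_of_mem_getLast? (by rw [h]; rfl)
  have htf := List.mem_filter.1 htmem
  have hpt := of_decide_eq_true htf.2
  have key : ¬ (t = i0 ∨ (Pl i0 l₁).getLast? = some t) := by
    rintro hts
    have hq : t.user = i0.user ∧ t.adv = i0.adv ∧ t.time ≤ i0.time := by
      rcases hts with rfl | hts
      · exact ⟨rfl, rfl, le_refl _⟩
      · have htm : t ∈ Pl i0 l₁ := List.mem_of_mem_getLast? (by rw [hts]; rfl)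
        have hmm := List.mem_filter.1 htm
        have hq' := of_decide_eq_true hmm.2
        exact ⟨hq'.1, hq'.2, l1_le hS t hmm.1⟩
    by_cases hp : pb c i0 = true
    · have hne : l₂.filter (pb c) ≠ [] := fun hh => hc ⟨hp, hh⟩
      have hlast : ((l₁ ++ l₂).filter (pb c)).getLast? = (l₂.filter (pb c)).getLast? := by
        rw [List.filter_append, List.getLast?_append]
        rcases hgl : (l₂.filter (pb c)).getLast? with _ | a
        · exact absurd (List.getLast?_eq_none_iff.mp hgl) hne
        · rfl
      have htl2 : t ∈ l₂.filter (pb c) := by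
        rw [hlast] at h
        exact List.mem_of_mem_getLast? (by rw [h]; rfl)
      have htl2' := List.mem_filter.1 htl2
      have hptc0 : pb c0 t = true := by
        apply decide_eq_true
        exact ⟨lt_of_le_of_lt hq.2.2 hp0.1, by rw [hq.1, hp0.2.1], by rw [hq.2.1, hp0.2.2]⟩
      have : t ∈ l₂.filter (pb c0) := List.mem_filter.2 ⟨htl2'.1, hptc0⟩
      rw [h0.2] at this
      exact absurd this (List.not_mem_nil)
    · apply hp
      apply decide_eq_true
      refine ⟨lt_of_lt_of_le hp0.1 ht, ?_, ?_⟩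
      · rw [← hq.1, hpt.2.1]
      · rw [← hq.2.1, hpt.2.2]
  exact ⟨fun he => key (Or.inl he), fun he => key (Or.inr he)⟩

/-! ### The coupling invariant -/

def Inv (r : ℝ) (i0 : Impression) (l₁ l₂ : List Impression) (R : List Conversion)
    (st st' : St) : Prop :=
  st = st' ∨
  ((∃ c0, (pb c0 i0 = true ∧ l₂.filter (pb c0) = []) ∧ ∀ c ∈ R, c0.time ≤ c.time) ∧
   (Pl i0 l₁).getLast? ≠ some i0 ∧
   (∀ x, x ≠ i0 → (Pl i0 l₁).getLast? ≠ some x → st.1 x = st'.1 x) ∧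
   (∀ ℓ, (Pl i0 l₁).getLast? = some ℓ → st.1 ℓ ≤ st'.1 ℓ) ∧
   lsum (st.2 - st'.2) ≤ (r - st'.1 i0) +
     (Pl i0 l₁).getLast?.elim 0 (fun ℓ => st'.1 ℓ - st.1 ℓ))

lemma inv_step (r : ℝ) (hS : (l₁ ++ i0 :: l₂).Pairwise (fun i j => i.time ≤ j.time))
    (c : Conversion) (R' : List Conversion)
    (hcR : ∀ c' ∈ R', c.time ≤ c'.time)
    (st st' : St) (hN : ∀ x, 0 ≤ st.1 x ∧ st.1 x ≤ r)
    (hN' : ∀ x, 0 ≤ st'.1 x ∧ st'.1 x ≤ r)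
    (hI : Inv r i0 l₁ l₂ (c :: R') st st') :
    Inv r i0 l₁ l₂ R' (step ((l₁ ++ l₂).filter (pb c)).getLast? c st)
      (step ((l₁ ++ i0 :: l₂).filter (pb c)).getLast? c st') := by
  by_cases hi : pb c i0 = true ∧ l₂.filter (pb c) = []
  · obtain ⟨hT', hE⟩ := i0Tgt hS c hi
    rw [hT', hE]
    by_cases hPi : (Pl i0 l₁).getLast? = some i0
    · rcases hI with hA | hB
      · subst hA
        rw [hPi]
        exact Or.inl rfl
      · exact absurd hPi hB.2.1
    · -- divergence step
      have hcpl : ∀ x, x ≠ i0 → (Pl i0 l₁).getLast? ≠ some x → st.1 x = st'.1 x := by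
        rcases hI with hA | hB
        · subst hA; intro x _ _; rfl
        · exact hB.2.2.1
      have hle : ∀ ℓ, (Pl i0 l₁).getLast? = some ℓ → st.1 ℓ ≤ st'.1 ℓ := by
        rcases hI with hA | hB
        · subst hA; exact fun ℓ _ => le_refl _
        · exact hB.2.2.2.1
      have hbound : lsum (st.2 - st'.2) ≤ (r - st'.1 i0) +
          (Pl i0 l₁).getLast?.elim 0 (fun ℓ => st'.1 ℓ - st.1 ℓ) := by
        rcases hI with hA | hB
        · subst hA
          have hz : lsum (st.2 - st.2) = 0 := by rw [sub_self]; exact lsum_zero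
          rw [hz]
          have h1 : (0:ℝ) ≤ r - st.1 i0 := by linarith [(hN i0).2]
          rcases hP : (Pl i0 l₁).getLast? with _ | ℓ
          · simpa using h1
          · simp only [Option.elim_some]; linarith
        · exact hB.2.2.2.2
      rw [step_some]
      rcases hP : (Pl i0 l₁).getLast? with _ | ℓ
      · -- no fallback impression: D does nothing
        simp only [step_none]
        simp only [hP, Option.elim_some, Option.elim_none] at hbound
        by_cases hk' : (1:ℝ) ≤ st'.1 i0
        · rw [if_pos hk']
          refine Or.inr ⟨⟨c, hi, hcR⟩, hPi, ?_, ?_, ?_⟩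
          · intro x hx hxP
            simp only [Function.update_of_ne hx]
            exact hcpl x hx hxP
          · intro ℓ hℓ; rw [hP] at hℓ; cases hℓ
          · simp only [hP, Option.elim_some, Option.elim_none, Function.update_self]
            have h1 := lsum_sub_right_le st.2 st'.2 (Finsupp.single (i0, c) 1)
            have h2 := lsum_single1 (i0, c)
            linarith
        · rw [if_neg hk']
          refine Or.inr ⟨⟨c, hi, hcR⟩, hPi, hcpl, ?_, ?_⟩
          · intro ℓ hℓ; rw [hP] at hℓ; cases hℓ
          · simp only [hP, Option.elim_none]; linarith
      · -- fallback impression ℓ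
        have hℓi0 : ℓ ≠ i0 := fun he => hPi (by rw [hP, he])
        have hi0ℓ : i0 ≠ ℓ := fun he => hℓi0 he.symm
        rw [step_some]
        simp only [hP, Option.elim_some, Option.elim_none] at hbound
        have hleℓ : st.1 ℓ ≤ st'.1 ℓ := hle ℓ hP
        by_cases hk : (1:ℝ) ≤ st.1 ℓ <;> by_cases hk' : (1:ℝ) ≤ st'.1 i0
        · -- both keep
          rw [if_pos hk, if_pos hk']
          refine Or.inr ⟨⟨c, hi, hcR⟩, hPi, ?_, ?_, ?_⟩
          · intro x hx hxP
            have hxℓ : x ≠ ℓ := fun he => hxP (by rw [hP, he])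
            simp only [Function.update_of_ne hx, Function.update_of_ne hxℓ]
            exact hcpl x hx hxP
          · intro ℓ' hℓ'
            rw [hP] at hℓ'
            injection hℓ' with hℓ''
            subst hℓ''
            simp only [Function.update_self, Function.update_of_ne hℓi0]
            linarith
          · simp only [hP, Option.elim_some, Function.update_self, Function.update_of_ne hℓi0,
              Function.update_of_ne hi0ℓ]
            have h1 := lsum_sub_le st.2 st'.2 (Finsupp.single (ℓ, c) 1) (Finsupp.single (i0, c) 1)
            have h2 := lsum_single1 (ℓ, c)
            have h3 := lsum_single1 (i0, c)
            linarith
        · -- D keeps, D' skips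
          rw [if_pos hk, if_neg hk']
          refine Or.inr ⟨⟨c, hi, hcR⟩, hPi, ?_, ?_, ?_⟩
          · intro x hx hxP
            have hxℓ : x ≠ ℓ := fun he => hxP (by rw [hP, he])
            simp only [Function.update_of_ne hxℓ]
            exact hcpl x hx hxP
          · intro ℓ' hℓ'
            rw [hP] at hℓ'
            injection hℓ' with hℓ''
            subst hℓ''
            simp only [Function.update_self]
            linarith
          · simp only [hP, Option.elim_some, Option.elim_none, Function.update_self]
            have h1 := lsum_sub_left_le st.2 st'.2 (Finsupp.single (ℓ, c) 1)
            have h2 := lsum_single1 (ℓ, c)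
            linarith
        · -- D skips, D' keeps
          rw [if_neg hk, if_pos hk']
          refine Or.inr ⟨⟨c, hi, hcR⟩, hPi, ?_, ?_, ?_⟩
          · intro x hx hxP
            simp only [Function.update_of_ne hx]
            exact hcpl x hx hxP
          · intro ℓ' hℓ'
            rw [hP] at hℓ'
            injection hℓ' with hℓ''
            subst hℓ''
            simp only [Function.update_of_ne hℓi0]
            linarith
          · simp only [hP, Option.elim_some, Function.update_self, Function.update_of_ne hℓi0]
            have h1 := lsum_sub_right_le st.2 st'.2 (Finsupp.single (i0, c) 1)
            have h2 := lsum_single1 (i0, c)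
            linarith
        · -- both skip
          rw [if_neg hk, if_neg hk']
          refine Or.inr ⟨⟨c, hi, hcR⟩, hPi, hcpl, hle, ?_⟩
          simp only [hP, Option.elim_some]
          linarith
  · rw [sameTgt c hi]
    rcases hI with hA | ⟨⟨c0, hc0, hc0le⟩, hne, hcpl, hle, hbound⟩
    · subst hA; exact Or.inl rfl
    · cases ht : ((l₁ ++ l₂).filter (pb c)).getLast? with
      | none =>
          refine Or.inr ⟨⟨c0, hc0, fun c' hc' => hc0le c' (List.mem_cons_of_mem _ hc')⟩,
            hne, hcpl, hle, hbound⟩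
      | some t =>
          obtain ⟨hti0, htℓ⟩ := keyA hS c0 c hc0 hi (hc0le c (List.mem_cons_self)) t ht
          have heq : st.1 t = st'.1 t := hcpl t hti0 htℓ
          rw [step_some, step_some, ← heq]
          by_cases hk : (1:ℝ) ≤ st.1 t
          · rw [if_pos hk, if_pos hk]
            refine Or.inr ⟨⟨c0, hc0, fun c' hc' => hc0le c' (List.mem_cons_of_mem _ hc')⟩,
              hne, ?_, ?_, ?_⟩
            · intro x hx hxℓ
              rcases eq_or_ne x t with rfl | hxt
              · simp [Function.update_self, heq]
              · simp only [Function.update_of_ne hxt]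
                exact hcpl x hx hxℓ
            · intro ℓ hℓ
              have hℓt : ℓ ≠ t := fun he => htℓ (he ▸ hℓ)
              simp only [Function.update_of_ne hℓt]
              exact hle ℓ hℓ
            · have hsub : (st.2 + Finsupp.single (t, c) 1) - (st'.2 + Finsupp.single (t, c) 1)
                  = st.2 - st'.2 := by abel
              simp only [hsub]
              have hi0t : i0 ≠ t := fun he => hti0 he.symm
              simp only [Function.update_of_ne hi0t]
              rcases hP : (Pl i0 l₁).getLast? with _ | ℓ
              · simpa [hP] using hbound
              · have hℓt : ℓ ≠ t := fun he => htℓ (he ▸ hP)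
                simp only [Option.elim_some, Function.update_of_ne hℓt]
                simpa [hP] using hbound
          · rw [if_neg hk, if_neg hk]
            refine Or.inr ⟨⟨c0, hc0, fun c' hc' => hc0le c' (List.mem_cons_of_mem _ hc')⟩,
              hne, hcpl, hle, hbound⟩

lemma main (r : ℝ) (hS : (l₁ ++ i0 :: l₂).Pairwise (fun i j => i.time ≤ j.time)) :
    ∀ (R : List Conversion) (st st' : St),
      R.Pairwise (fun c c' => c.time ≤ c'.time) →
      (∀ x, 0 ≤ st.1 x ∧ st.1 x ≤ r) → (∀ x, 0 ≤ st'.1 x ∧ st'.1 x ≤ r) →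
      Inv r i0 l₁ l₂ R st st' →
      lsum ((R.foldl (fun s c => step ((l₁ ++ l₂).filter (pb c)).getLast? c s) st).2
          - (R.foldl (fun s c => step ((l₁ ++ i0 :: l₂).filter (pb c)).getLast? c s) st').2)
        ≤ 2 * r := by
  intro R
  induction R with
  | nil =>
      intro st st' _ hN hN' hI
      simp only [List.foldl_nil]
      rcases hI with hA | ⟨_, _, _, _, hbound⟩
      · rw [hA, sub_self, lsum_zero]
        linarith [(hN' i0).1, (hN' i0).2]
      · rcases hP : (Pl i0 l₁).getLast? with _ | ℓ <;> simp only [hP, Option.elim_some, Option.elim_none] at hbound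
        · linarith [(hN' i0).1, (hN' i0).2]
        · linarith [(hN' i0).1, (hN' i0).2, (hN' ℓ).2, (hN ℓ).1]
  | cons c R ih =>
      intro st st' hsort hN hN' hI
      simp only [List.foldl_cons]
      have hcR : ∀ c' ∈ R, c.time ≤ c'.time := (List.pairwise_cons.mp hsort).1
      exact ih _ _ (List.pairwise_cons.mp hsort).2
        (fun x => ⟨step_nonneg _ _ _ (fun y => (hN y).1) x, step_le r _ _ _ (fun y => (hN y).2) x⟩)
        (fun x => ⟨step_nonneg _ _ _ (fun y => (hN' y).1) x,
          step_le r _ _ _ (fun y => (hN' y).2) x⟩)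
        (inv_step r hS c R hcR st st' hN hN' hI)

end ThmA5


/-- Theorem A.5: for last-touch attribution, the impression adjacency relation with
post-attribution contribution bound enforcement (bound `r`, per-impression scope) yields
attributed datasets at ℓ₁-distance at most `2r`. -/
theorem post_attr_impression_lta_valid (r : ℕ) (hr : 0 < r) (D D' : Dataset)
    (hD' : SortedDS D') (hadj : AddOneImpression D D') :
    l1dist (postAttr LTA (fun i => i) (r : ℝ) D)
      (postAttr LTA (fun i => i) (r : ℝ) D') ≤ 2 * (r : ℝ) := by
  obtain ⟨i0, l₁, l₂, h1, h2, h3⟩ := hadj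
  have hSi : (l₁ ++ i0 :: l₂).Pairwise (fun i j => i.time ≤ j.time) := by
    rw [← h2]; exact hD'.1
  have hr0 : (0:ℝ) ≤ (r:ℝ) := Nat.cast_nonneg r
  have hred : ∀ (E : Dataset), postAttr LTA (fun i => i) (r:ℝ) E =
      (E.convs.foldl (fun st c => ThmA5.step (eligible E c).getLast? c st)
        ((fun _ => (r:ℝ)), 0)).2 := by
    intro E
    unfold postAttr
    rw [ThmA5.fold_reduce (eligible E) E.convs _ (fun x => hr0)]
  show ThmA5.lsum (postAttr LTA (fun i => i) (r:ℝ) D - postAttr LTA (fun i => i) (r:ℝ) D')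
    ≤ 2 * (r:ℝ)
  rw [hred D, hred D']
  have hel : ∀ c, eligible D c = (l₁ ++ l₂).filter (ThmA5.pb c) := by
    intro c; rw [eligible, h1]; rfl
  have hel' : ∀ c, eligible D' c = (l₁ ++ i0 :: l₂).filter (ThmA5.pb c) := by
    intro c; rw [eligible, h2]; rfl
  simp only [hel, hel', h3]
  exact ThmA5.main (r:ℝ) hSi D'.convs _ _ hD'.2
    (fun x => ⟨hr0, le_refl _⟩) (fun x => ⟨hr0, le_refl _⟩) (Or.inl rfl)
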